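/- Let σ : ℝ → ℝ be ρ-Lipschitz with ρ > 0 (applied entrywise to vectors), let κ > 0, α ∈ {0,1}, ω ≥ 0, c ≥ 0, and let W₁, W₂, W̃₁, W̃₂ be m×m real matrices with ‖W₁‖₂ ≤ 3, ‖W̃₁ - W₁‖₂ ≤ ω and ‖W̃₂ - W₂‖₂ ≤ ω. Let x_1, x_2, … ∈ ℝ^m satisfy ‖x_ℓ‖₂ ≤ 1 for all ℓ ≥ 1. Define recursively h_0 = h̃_0 = 0 and, for ℓ ≥ 1, h_ℓ = σ(κ·(W₁·h_{ℓ-1} + W₂·x_ℓ)) + α·h_{ℓ-1} and h̃_ℓ = σ(κ·(W̃₁·h̃_{ℓ-1} + W̃₂·x_ℓ)) + α·h̃_{ℓ-1}. If in addition ‖h̃_ℓ‖₂ ≤ c for every ℓ ≥ 0, then for every ℓ ≥ 0, ‖h̃_ℓ - h_ℓ‖₂ ≤ κρω·(1 + c)·((1 + 3κρ)^ℓ - 1)/(3κρ). -/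

import Mathlib

open scoped NNReal

/-- Euclidean (ℓ₂) norm of a vector in `ℝ^m`. -/
noncomputable def l2norm {m : ℕ} (v : Fin m → ℝ) : ℝ := Real.sqrt (∑ i, v i ^ 2)

/-- ℓ₂→ℓ₂ operator (spectral) norm of a real matrix. -/
noncomputable def l2OpNorm {m n : ℕ} (A : Matrix (Fin m) (Fin n) ℝ) : ℝ :=
  ‖LinearMap.toContinuousLinearMap (Matrix.toEuclideanLin A)‖

lemma l2norm_eq {m : ℕ} (v : Fin m → ℝ) :
    l2norm v = ‖(WithLp.equiv 2 (Fin m → ℝ)).symm v‖ := by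
  rw [EuclideanSpace.norm_eq]
  simp [l2norm, Real.norm_eq_abs, sq_abs]

lemma l2norm_add {m : ℕ} (u v : Fin m → ℝ) :
    l2norm (u + v) ≤ l2norm u + l2norm v := by
  simp only [l2norm_eq]
  exact norm_add_le _ _

lemma l2norm_smul {m : ℕ} (a : ℝ) (v : Fin m → ℝ) :
    l2norm (a • v) = |a| * l2norm v := by
  simp only [l2norm_eq]
  rw [show (WithLp.equiv 2 (Fin m → ℝ)).symm (a • v)
    = a • (WithLp.equiv 2 (Fin m → ℝ)).symm v from rfl, norm_smul, Real.norm_eq_abs]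

lemma l2norm_nonneg {m : ℕ} (v : Fin m → ℝ) : 0 ≤ l2norm v := Real.sqrt_nonneg _

lemma l2norm_mulVec {m : ℕ} (A : Matrix (Fin m) (Fin m) ℝ) (v : Fin m → ℝ) :
    l2norm (A.mulVec v) ≤ l2OpNorm A * l2norm v := by
  simp only [l2norm_eq]
  have := (LinearMap.toContinuousLinearMap (Matrix.toEuclideanLin A)).le_opNorm
    ((WithLp.equiv 2 (Fin m → ℝ)).symm v)
  rw [l2OpNorm]; exact this

lemma l2norm_lip {m : ℕ} (σ : ℝ → ℝ) (ρ : ℝ≥0) (hσ : LipschitzWith ρ σ)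
    (a b : Fin m → ℝ) :
    l2norm (fun i => σ (a i) - σ (b i)) ≤ ρ * l2norm (a - b) := by
  unfold l2norm
  rw [show (ρ : ℝ) * Real.sqrt (∑ i, (a - b) i ^ 2)
      = Real.sqrt ((ρ : ℝ) ^ 2 * ∑ i, (a - b) i ^ 2) by
    rw [Real.sqrt_mul (by positivity), Real.sqrt_sq ρ.coe_nonneg]]
  apply Real.sqrt_le_sqrt
  rw [Finset.mul_sum]
  apply Finset.sum_le_sum
  intro i _
  have h1 : |σ (a i) - σ (b i)| ≤ ρ * |a i - b i| := by
    have := hσ.dist_le_mul (a i) (b i)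
    simpa [Real.dist_eq] using this
  calc (σ (a i) - σ (b i)) ^ 2 = |σ (a i) - σ (b i)| ^ 2 := (sq_abs _).symm
    _ ≤ ((ρ : ℝ) * |a i - b i|) ^ 2 := by
        apply pow_le_pow_left₀ (abs_nonneg _) h1
    _ = (ρ : ℝ) ^ 2 * (a - b) i ^ 2 := by
        rw [mul_pow, sq_abs]; rfl

/-- RNN hidden states computed at two `ω`-close sets of weights stay close: with a
`ρ`-Lipschitz activation `σ` (entrywise), normalization `κ > 0`, residual flag
`α ∈ {0,1}`, `‖W₁‖₂ ≤ 3`, `‖W̃₁ - W₁‖₂ ≤ ω`, `‖W̃₂ - W₂‖₂ ≤ ω`, inputs `‖x_ℓ‖₂ ≤ 1`,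
recursions `h_ℓ = σ(κ(W₁h_{ℓ-1} + W₂x_ℓ)) + α·h_{ℓ-1}` (resp. with tildes) from
`h_0 = h̃_0 = 0`, and `‖h̃_ℓ‖₂ ≤ c` for all `ℓ`, one has
`‖h̃_ℓ - h_ℓ‖₂ ≤ κρω(1 + c)((1 + 3κρ)^ℓ - 1)/(3κρ)` for every `ℓ ≥ 0`. -/
theorem rnn_hidden_states_stable {m : ℕ} (σ : ℝ → ℝ) (ρ : ℝ≥0) (hρ : 0 < ρ)
    (hσ : LipschitzWith ρ σ) (κ : ℝ) (hκ : 0 < κ) (α : ℝ) (hα : α = 0 ∨ α = 1)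
    (ω : ℝ) (hω : 0 ≤ ω) (c : ℝ) (hc : 0 ≤ c)
    (W₁ W₂ W₁' W₂' : Matrix (Fin m) (Fin m) ℝ)
    (hW₁ : l2OpNorm W₁ ≤ 3) (hd₁ : l2OpNorm (W₁' - W₁) ≤ ω)
    (hd₂ : l2OpNorm (W₂' - W₂) ≤ ω)
    (x : ℕ → Fin m → ℝ) (hx : ∀ ℓ, 1 ≤ ℓ → l2norm (x ℓ) ≤ 1)
    (h h' : ℕ → Fin m → ℝ) (h0 : h 0 = 0) (h0' : h' 0 = 0)
    (hrec : ∀ ℓ, 1 ≤ ℓ →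
      h ℓ = (fun i => σ (κ * (W₁.mulVec (h (ℓ - 1)) i + W₂.mulVec (x ℓ) i))) +
        α • h (ℓ - 1))
    (hrec' : ∀ ℓ, 1 ≤ ℓ →
      h' ℓ = (fun i => σ (κ * (W₁'.mulVec (h' (ℓ - 1)) i + W₂'.mulVec (x ℓ) i))) +
        α • h' (ℓ - 1))
    (hbdd : ∀ ℓ, l2norm (h' ℓ) ≤ c) :
    ∀ ℓ, l2norm (h' ℓ - h ℓ) ≤
      κ * ρ * ω * (1 + c) * ((1 + 3 * κ * ρ) ^ ℓ - 1) / (3 * κ * ρ) := by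
  have hρ' : (0 : ℝ) < ρ := hρ
  have hB : (0 : ℝ) ≤ κ * ρ * ω * (1 + c) := by positivity
  have h3 : (0 : ℝ) < 3 * κ * ρ := by positivity
  -- key step bound
  have key : ∀ ℓ : ℕ, l2norm (h' (ℓ + 1) - h (ℓ + 1)) ≤
      (1 + 3 * κ * ρ) * l2norm (h' ℓ - h ℓ) + κ * ρ * ω * (1 + c) := by
    intro ℓ
    have e1 := hrec (ℓ + 1) (Nat.le_add_left 1 ℓ)
    have e2 := hrec' (ℓ + 1) (Nat.le_add_left 1 ℓ)
    simp only [Nat.add_sub_cancel] at e1 e2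
    set a : Fin m → ℝ := fun i => κ * (W₁.mulVec (h ℓ) i + W₂.mulVec (x (ℓ+1)) i) with ha
    set b : Fin m → ℝ := fun i => κ * (W₁'.mulVec (h' ℓ) i + W₂'.mulVec (x (ℓ+1)) i) with hb
    have hdecomp : h' (ℓ + 1) - h (ℓ + 1) =
        (fun i => σ (b i) - σ (a i)) + α • (h' ℓ - h ℓ) := by
      rw [e1, e2]
      funext i
      simp [smul_sub]
      ring
    rw [hdecomp]
    have step1 : l2norm ((fun i => σ (b i) - σ (a i)) + α • (h' ℓ - h ℓ)) ≤
        (ρ : ℝ) * l2norm (b - a) + l2norm (h' ℓ - h ℓ) := by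
      refine (l2norm_add _ _).trans (add_le_add (l2norm_lip σ ρ hσ b a) ?_)
      rw [l2norm_smul]
      rcases hα with hα | hα <;> simp [hα, l2norm_nonneg]
    have hba : b - a = κ • (W₁.mulVec (h' ℓ - h ℓ) + ((W₁' - W₁).mulVec (h' ℓ)
        + (W₂' - W₂).mulVec (x (ℓ+1)))) := by
      funext i
      simp [ha, hb, Matrix.sub_mulVec, Matrix.mulVec_sub, Pi.smul_apply, smul_eq_mul]
      ring
    have hbn : l2norm (b - a) ≤ κ * (3 * l2norm (h' ℓ - h ℓ) + (ω * c + ω * 1)) := by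
      rw [hba, l2norm_smul, abs_of_pos hκ]
      apply mul_le_mul_of_nonneg_left _ hκ.le
      refine (l2norm_add _ _).trans (add_le_add ?_ ((l2norm_add _ _).trans (add_le_add ?_ ?_)))
      · exact (l2norm_mulVec _ _).trans (mul_le_mul_of_nonneg_right hW₁ (l2norm_nonneg _))
      · exact (l2norm_mulVec _ _).trans (mul_le_mul hd₁ (hbdd ℓ) (l2norm_nonneg _) hω)
      · exact (l2norm_mulVec _ _).trans
          (mul_le_mul hd₂ (hx (ℓ+1) (Nat.le_add_left 1 ℓ)) (l2norm_nonneg _) hω)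
    calc l2norm ((fun i => σ (b i) - σ (a i)) + α • (h' ℓ - h ℓ))
        ≤ (ρ : ℝ) * l2norm (b - a) + l2norm (h' ℓ - h ℓ) := step1
      _ ≤ (ρ : ℝ) * (κ * (3 * l2norm (h' ℓ - h ℓ) + (ω * c + ω * 1)))
          + l2norm (h' ℓ - h ℓ) := by
          exact add_le_add (mul_le_mul_of_nonneg_left hbn ρ.coe_nonneg) le_rfl
      _ = (1 + 3 * κ * ρ) * l2norm (h' ℓ - h ℓ) + κ * ρ * ω * (1 + c) := by ring
  intro ℓ
  induction ℓ with
  | zero => simp [h0, h0', l2norm]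
  | succ n ih =>
    refine (key n).trans ?_
    have step : (1 + 3 * κ * ρ) * l2norm (h' n - h n) + κ * ρ * ω * (1 + c) ≤
        (1 + 3 * κ * ρ) * (κ * ρ * ω * (1 + c) * ((1 + 3 * κ * ρ) ^ n - 1) / (3 * κ * ρ))
          + κ * ρ * ω * (1 + c) := by
      have h1 : (0:ℝ) ≤ 1 + 3 * κ * ρ := by linarith
      exact add_le_add (mul_le_mul_of_nonneg_left ih h1) le_rfl
    refine step.trans (le_of_eq ?_)
    have hne : (3 : ℝ) * κ * ρ ≠ 0 := ne_of_gt h3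
    field_simp
    ring
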